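/- Under the Setup below, for every integer 0 ≤ i ≤ n-2 one has s_{1,i} = r_i + x[(v-1)p_i + q_i], where s_{1,i} is the remainder of i·x upon division by n-1. -/
import Mathlib


lemma stmt12_aux (x M r K n i : ℕ) (hx : 3 ≤ x) (hM : 1 ≤ M) (hr : r < x)
    (hK : K < M) (hn : n = x * M) (hieq : i = M * r + K) (hle : i ≤ n - 2) :
    (i * x) % (n - 1) = r + x * K := by
  subst hn hieq
  have h2 : 2 ≤ x * M := by nlinarith
  have hi2 : M * r + K + 2 ≤ x * M := by omega
  have hlt : r + x * K + 2 ≤ x * M := by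
    rcases le_or_gt (K + 2) M with h | h
    · have h1 := Nat.mul_le_mul_left x h
      nlinarith
    · have hKe : M = K + 1 := by omega
      subst hKe
      nlinarith [hi2, hr]
  have heq : (M * r + K) * x = (r + x * K) + (x * M - 1) * r := by
    zify [show 1 ≤ x * M by omega]
    ring
  rw [heq, Nat.add_mul_mod_self_left]
  apply Nat.mod_eq_of_lt
  omega

/-- STATEMENT 12 (Setup: `λ` has `ua+v` parts equal to `x` and `v-(u+1)` parts equal to
`ax`, with `3 ≤ a ≤ x`, `0 ≤ u ≤ a-3`, `u+2 ≤ v ≤ min(a-1, a(x-1)/x)`, so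
`n = x[(a+1)(v-1)+1]`; every `0 ≤ i ≤ n-2` is uniquely `i = (n/x)·r + (v-1)·p + q` with
`0 ≤ r < x`, `0 ≤ (v-1)p+q < (a+1)(v-1)+1`, `0 ≤ p ≤ a+1`, `0 ≤ q < v-1` unless `p = a+1`
in which case `q = 0`): the remainder `s_{1,i}` of `i·x` upon division by `n-1` equals
`r + x[(v-1)p + q]`. -/
theorem stmt_12 (a x u v : ℕ) (ha : 3 ≤ a) (hax : a ≤ x)
    (hu : u ≤ a - 3) (hv1 : u + 2 ≤ v) (hv2 : v ≤ a - 1) (hv3 : v * x ≤ a * (x - 1))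
    (n : ℕ) (hn : n = x * ((a + 1) * (v - 1) + 1))
    (i r p q : ℕ) (hi : i ≤ n - 2)
    (hdecomp : i = (n / x) * r + (v - 1) * p + q)
    (hr : r < x) (hpq : (v - 1) * p + q < (a + 1) * (v - 1) + 1)
    (hp : p ≤ a + 1) (hq : q < v - 1 ∨ q = 0) (hpa : p = a + 1 → q = 0) :
    (i * x) % (n - 1) = r + x * ((v - 1) * p + q) := by
  have hx3 : 3 ≤ x := ha.trans hax
  have hnx : n / x = (a + 1) * (v - 1) + 1 := by
    rw [hn]; exact Nat.mul_div_cancel_left _ (by omega)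
  refine stmt12_aux x ((a + 1) * (v - 1) + 1) r ((v - 1) * p + q) n i hx3 (by omega) hr hpq hn ?_ hi
  rw [hdecomp, hnx]; ring
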